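/- Let G be a group, φ : G → ℤⁿ a surjective homomorphism, ρ : G → GL(l, ℂ) a representation, and α : ℤⁿ → ℂ an additive homomorphism, factored as α = α̃ ∘ p where p : ℤⁿ → ℤᵐ is surjective and α̃ : ℤᵐ → ℂ is injective. Define the formal exponential deformation γ̂ : G → GL(l, ℂ[[t]]) by γ̂(g) = exp(t·α(φ(g)))·ρ(g). Then for every bounded chain complex C_* of finitely generated free right ℤ[G]-modules and every k, the dimension over the field ℂ((t)) of formal Laurent series of H_k(C_* ⊗_{ℤ[G], γ̂} ℂ((t))^l) equals b_k(C_*, ρ; p), the dimension over the fraction field of ℂ[ℤᵐ] of H_k(C_* ⊗_{ℤ[G], ρ_p} {ℂ[ℤᵐ]}^l). -/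

import Mathlib

/-- A finite free chain complex `0 ← C_0 ← C_1 ← ⋯ ← C_N ← 0` over a ring `T`,
recorded by the ranks `c k` of its finitely generated free chain modules and the
matrices of its boundary operators; `d k` is the matrix of `∂_{k+1} : C_{k+1} → C_k`. -/
structure FinFreeChainComplex (T : Type) [Ring T] where
  N : ℕ
  c : ℕ → ℕ
  bounded : ∀ k : ℕ, N < k → c k = 0
  d : ∀ k : ℕ, Matrix (Fin (c k)) (Fin (c (k + 1))) T
  dsq : ∀ k : ℕ, d k * d (k + 1) = 0

/-- The rank, over the fraction field `{U}` of `U`, of the matrix of `∂_{k+1}`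
with entries mapped by the ring homomorphism `φ : T →+* U`. -/
noncomputable def FinFreeChainComplex.bdryRank {T U : Type} [Ring T] [CommRing U]
    (C : FinFreeChainComplex T) (φ : T →+* U) (k : ℕ) : ℕ :=
  ((C.d k).map ⇑((algebraMap U (FractionRing U)).comp φ)).rank

/-- The rank, over `{U}`, of the matrix of `∂_k : C_k → C_{k-1}` (with `∂_0 = 0`)
with entries mapped by `φ`. -/
noncomputable def FinFreeChainComplex.bdryRankAt {T U : Type} [Ring T] [CommRing U]
    (C : FinFreeChainComplex T) (φ : T →+* U) (k : ℕ) : ℕ :=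
  match k with
  | 0 => 0
  | k' + 1 => C.bdryRank φ k'

/-- `b_k(C_*, φ) = dim_{{U}} H_k(C_* ⊗_φ {U}) = c_k − rk φ(∂_k) − rk φ(∂_{k+1})`. -/
noncomputable def FinFreeChainComplex.bettiMap {T U : Type} [Ring T] [CommRing U]
    (C : FinFreeChainComplex T) (φ : T →+* U) (k : ℕ) : ℕ :=
  C.c k - C.bdryRankAt φ k - C.bdryRank φ k

/-- `b_k(C_*) = dim_{{T}} H_k(C_* ⊗_T {T})`. -/
noncomputable def FinFreeChainComplex.betti {T : Type} [CommRing T]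
    (C : FinFreeChainComplex T) (k : ℕ) : ℕ :=
  C.bettiMap (RingHom.id T) k


/-- Flattening of a block matrix: a matrix of `l × l` matrices becomes an ordinary matrix. -/
def blockFlatten {a b l : ℕ} {S : Type}
    (M : Matrix (Fin a) (Fin b) (Matrix (Fin l) (Fin l) S)) :
    Matrix (Fin a × Fin l) (Fin b × Fin l) S :=
  Matrix.of fun ik jl => M ik.1 jl.1 ik.2 jl.2

/-- The ring homomorphism `ℤ[G] → Mat_l(S)` induced by a representation
`τ : G →* GL(l, S)`. -/
noncomputable def reprMatRingHom {G : Type} [Group G] {l : ℕ} {S : Type} [CommRing S]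
    (τ : G →* GL (Fin l) S) : MonoidAlgebra ℤ G →+* Matrix (Fin l) (Fin l) S :=
  ((MonoidAlgebra.lift ℤ (Matrix (Fin l) (Fin l) S) G)
    ((Units.coeHom (Matrix (Fin l) (Fin l) S)).comp τ)).toRingHom

/-- The rank over the fraction field `{S}` of the matrix of `∂_{k+1} ⊗ 1` in the
complex `C_* ⊗_{ℤ[G], τ} {S}^l`. -/
noncomputable def reprBdryRank {G : Type} [Group G] {l : ℕ} {S : Type} [CommRing S]
    (C : FinFreeChainComplex (MonoidAlgebra ℤ G)) (τ : G →* GL (Fin l) S) (k : ℕ) : ℕ :=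
  ((blockFlatten ((C.d k).map ⇑(reprMatRingHom τ))).map
    ⇑(algebraMap S (FractionRing S))).rank

/-- The rank over `{S}` of the matrix of `∂_k ⊗ 1` (with `∂_0 = 0`). -/
noncomputable def reprBdryRankAt {G : Type} [Group G] {l : ℕ} {S : Type} [CommRing S]
    (C : FinFreeChainComplex (MonoidAlgebra ℤ G)) (τ : G →* GL (Fin l) S) (k : ℕ) : ℕ :=
  match k with
  | 0 => 0
  | k' + 1 => reprBdryRank C τ k'

/-- `b_k(C_*, τ) = dim_{{S}} H_k(C_* ⊗_{ℤ[G], τ} {S}^l)` for a representation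
`τ : G →* GL(l, S)` into an integral domain `S`. -/
noncomputable def reprBetti {G : Type} [Group G] {l : ℕ} {S : Type} [CommRing S]
    (C : FinFreeChainComplex (MonoidAlgebra ℤ G)) (τ : G →* GL (Fin l) S) (k : ℕ) : ℕ :=
  C.c k * l - reprBdryRankAt C τ k - reprBdryRank C τ k

/-- The homomorphism `GL(l, S) →* GL(l, S')` induced by a ring homomorphism `S →+* S'`. -/
def glMap {l : ℕ} {S S' : Type} [CommRing S] [CommRing S'] (f : S →+* S') :
    GL (Fin l) S →* GL (Fin l) S' :=
  Units.map f.mapMatrix.toMonoidHom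

/-- The formal power series `exp(βt) = Σ_{n≥0} βⁿtⁿ/n! ∈ ℂ[[t]]`. -/
noncomputable def expPS (β : ℂ) : PowerSeries ℂ :=
  PowerSeries.mk fun n => β ^ n / (n.factorial : ℂ)



open Matrix

variable {K : Type*} [Field K]

/-- A square matrix over a field whose rank equals its size is a unit. -/
lemma sq_isUnit {r : ℕ} (N : Matrix (Fin r) (Fin r) K) (h : N.rank = r) : IsUnit N := by
  have hsurj : Function.Surjective N.mulVecLin := by
    rw [← LinearMap.range_eq_top]
    apply Submodule.eq_top_of_finrank_eq
    rw [← Matrix.rank, h]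
    simp [Module.finrank_pi]
  classical
  set B : Matrix (Fin r) (Fin r) K := Matrix.of fun i j => (hsurj (Pi.single j 1)).choose i with hB
  have hMB : N * B = 1 := by
    ext i j
    have := (hsurj (Pi.single j 1)).choose_spec
    have h2 : N.mulVec (fun i => B i j) = Pi.single j 1 := by
      convert this using 2
      rfl
    calc (N * B) i j = N.mulVec (fun i => B i j) i := by
          simp [Matrix.mul_apply, Matrix.mulVec, dotProduct]
    _ = (Pi.single j 1 : Fin r → K) i := by rw [h2]
    _ = (1 : Matrix (Fin r) (Fin r) K) i j := by
          simp [Matrix.one_apply, Pi.single_apply, eq_comm]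
  exact ⟨⟨N, B, hMB, mul_eq_one_comm.mp hMB⟩, rfl⟩


lemma exists_cols {a b : Type*} [Fintype a] [Fintype b] [DecidableEq a] [DecidableEq b]
    (M : Matrix a b K) {r : ℕ} (h : M.rank = r) :
    ∃ fc : Fin r → b, Function.Injective fc ∧ (M.submatrix id fc).rank = r := by
  classical
  obtain ⟨t, hts, hspan, hli⟩ := exists_linearIndependent K (Set.range Mᵀ)
  have htfin : t.Finite := hli.setFinite
  haveI : Fintype t := htfin.fintype
  have hcard : Fintype.card t = r := by
    have h1 : Module.finrank K (Submodule.span K t) = t.toFinset.card :=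
      finrank_span_set_eq_card hli
    rw [hspan, show Set.range Mᵀ = Set.range M.col from rfl, ← Matrix.rank_eq_finrank_span_cols, h] at h1
    rw [← Set.toFinset_card, ← h1]
  have e : Fin r ≃ t := (Fintype.equivFinOfCardEq hcard).symm
  have hmem : ∀ i : Fin r, ∃ j : b, Mᵀ j = (e i : a → K) := fun i => hts (e i).2
  refine ⟨fun i => (hmem i).choose, ?_, ?_⟩
  · intro i i' hii
    apply e.injective
    apply Subtype.ext
    rw [← (hmem i).choose_spec, ← (hmem i').choose_spec]
    exact congrArg Mᵀ hii
  · have hrange : Set.range (M.submatrix id (fun i => (hmem i).choose))ᵀ = t := by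
      ext v
      constructor
      · rintro ⟨i, rfl⟩
        have : (M.submatrix id fun i => (hmem i).choose)ᵀ i = Mᵀ ((hmem i).choose) := rfl
        rw [this, (hmem i).choose_spec]
        exact (e i).2
      · intro hv
        obtain ⟨i, hi⟩ := e.surjective ⟨v, hv⟩
        refine ⟨i, ?_⟩
        have : (M.submatrix id fun i => (hmem i).choose)ᵀ i = Mᵀ ((hmem i).choose) := rfl
        rw [this, (hmem i).choose_spec, hi]
    rw [Matrix.rank_eq_finrank_span_cols, show Set.range (M.submatrix id fun i => (hmem i).choose).col = t from hrange, hspan,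
      show Set.range Mᵀ = Set.range M.col from rfl, ← Matrix.rank_eq_finrank_span_cols M, h]

lemma exists_sq {a b : Type*} [Fintype a] [Fintype b] [DecidableEq a] [DecidableEq b]
    (M : Matrix a b K) {r : ℕ} (h : M.rank = r) :
    ∃ (fr : Fin r → a) (fc : Fin r → b), Function.Injective fr ∧ Function.Injective fc ∧
      (M.submatrix fr fc).det ≠ 0 := by
  obtain ⟨fc, hfc, h1⟩ := exists_cols M h
  have h2 : ((M.submatrix id fc)ᵀ).rank = r := by rw [Matrix.rank_transpose, h1]
  obtain ⟨fr, hfr, h3⟩ := exists_cols _ h2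
  have h4 : ((M.submatrix id fc)ᵀ).submatrix id fr = (M.submatrix fr fc)ᵀ := rfl
  rw [h4, Matrix.rank_transpose] at h3
  refine ⟨fr, fc, hfr, hfc, ?_⟩
  exact ((Matrix.isUnit_iff_isUnit_det _).mp (sq_isUnit _ h3)).ne_zero

lemma rank_ge_of_det {a b : Type*} [Fintype a] [Fintype b] [DecidableEq a] [DecidableEq b]
    (M : Matrix a b K) {r : ℕ} (fr : Fin r → a) (fc : Fin r → b)
    (hdet : (M.submatrix fr fc).det ≠ 0) : r ≤ M.rank := by
  have key : M.submatrix fr fc =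
      ((1 : Matrix a a K).submatrix fr ⇑(Equiv.refl a) * M) *
        (1 : Matrix b b K).submatrix ⇑(Equiv.refl b) fc := by
    rw [Matrix.one_submatrix_mul, Matrix.mul_submatrix_one]
    congr
  have hrank : (M.submatrix fr fc).rank = r := by
    rw [Matrix.rank_of_isUnit _ ((Matrix.isUnit_iff_isUnit_det _).mpr (isUnit_iff_ne_zero.mpr hdet))]
    simp
  calc r = (M.submatrix fr fc).rank := hrank.symm
  _ ≤ ((1 : Matrix a a K).submatrix fr ⇑(Equiv.refl a) * M).rank := by
      rw [key]; exact Matrix.rank_mul_le_left _ _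
  _ ≤ M.rank := Matrix.rank_mul_le_right _ _

lemma rank_map_field {L : Type*} [Field L] (f : K →+* L)
    {a b : Type*} [Fintype a] [Fintype b] [DecidableEq a] [DecidableEq b]
    (M : Matrix a b K) : (M.map ⇑f).rank = M.rank := by
  apply le_antisymm
  · obtain ⟨fr, fc, _, _, hdet⟩ := exists_sq (M.map ⇑f) rfl
    apply rank_ge_of_det M fr fc
    intro h0
    apply hdet
    have : (M.map ⇑f).submatrix fr fc = (M.submatrix fr fc).map ⇑f := rfl
    rw [this, ← RingHom.mapMatrix_apply, ← RingHom.map_det, h0, map_zero]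
  · obtain ⟨fr, fc, _, _, hdet⟩ := exists_sq M rfl
    apply rank_ge_of_det (M.map ⇑f) fr fc
    have : (M.map ⇑f).submatrix fr fc = (M.submatrix fr fc).map ⇑f := rfl
    rw [this, ← RingHom.mapMatrix_apply, ← RingHom.map_det]
    simpa using fun h0 => hdet (f.injective (by rw [h0, map_zero]))

lemma expPS_eq (β : ℂ) : expPS β = PowerSeries.rescale β (PowerSeries.exp ℂ) := by
  ext n
  simp [expPS, PowerSeries.coeff_rescale, PowerSeries.coeff_exp, map_div₀, div_eq_mul_inv]

lemma expPS_zero : expPS 0 = 1 := by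
  ext n
  simp [expPS, PowerSeries.coeff_one, zero_pow_eq]
  rcases n with _ | n <;> simp

lemma expPS_add (a b : ℂ) : expPS (a + b) = expPS a * expPS b := by
  rw [expPS_eq, expPS_eq, expPS_eq, PowerSeries.exp_mul_exp_eq_exp_add]

noncomputable def expMonoidHom {m : ℕ} (αt : (Fin m → ℤ) →+ ℂ) :
    Multiplicative (Fin m → ℤ) →* PowerSeries ℂ where
  toFun x := expPS (αt (Multiplicative.toAdd x))
  map_one' := by simpa using expPS_zero
  map_mul' x y := by simpa using expPS_add _ _

noncomputable def eps {m : ℕ} (αt : (Fin m → ℤ) →+ ℂ) :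
    AddMonoidAlgebra ℂ (Fin m → ℤ) →ₐ[ℂ] PowerSeries ℂ :=
  AddMonoidAlgebra.lift ℂ _ _ (expMonoidHom αt)

lemma coeff_eps {m : ℕ} (αt : (Fin m → ℤ) →+ ℂ) (q : AddMonoidAlgebra ℂ (Fin m → ℤ)) (j : ℕ) :
    PowerSeries.coeff j (eps αt q) = ∑ x ∈ q.coeff.support, q.coeff x * (αt x) ^ j / (j.factorial : ℂ) := by
  classical
  have h1 : eps αt q = ∑ x ∈ q.coeff.support, q.coeff x • expPS (αt x) := by
    conv_lhs => rw [← AddMonoidAlgebra.sum_coeff_single q]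
    rw [Finsupp.sum, map_sum]
    refine Finset.sum_congr rfl fun x hx => ?_
    rw [eps, AddMonoidAlgebra.lift_single]
    rfl
  rw [h1, map_sum]
  refine Finset.sum_congr rfl fun x hx => ?_
  rw [_root_.map_smul]
  simp [expPS, smul_eq_mul, mul_div_assoc]

lemma eps_injective {m : ℕ} (αt : (Fin m → ℤ) →+ ℂ) (hαt : Function.Injective αt) :
    Function.Injective (eps αt) := by
  classical
  rw [injective_iff_map_eq_zero]
  intro q hq
  by_contra hq0
  set s := q.coeff.support with hs
  have hsne : s.Nonempty := Finsupp.support_nonempty_iff.mpr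
    (fun h => hq0 (AddMonoidAlgebra.coeff_inj.mp (by rw [h]; rfl)))
  set r := s.card with hr
  have e : Fin r ≃ ↥s := s.equivFin.symm
  set β : Fin r → ℂ := fun i => αt ((e i : (Fin m → ℤ))) with hβ
  have hβinj : Function.Injective β := by
    intro i i' h
    exact e.injective (Subtype.ext (hαt h))
  set c : Fin r → ℂ := fun i => q.coeff ((e i : (Fin m → ℤ))) with hc
  have key : ∀ j : ℕ, ∑ i, c i * β i ^ j = 0 := by
    intro j
    have h2 : PowerSeries.coeff j (eps αt q) = 0 := by rw [hq, map_zero]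
    rw [coeff_eps] at h2
    have h3 : ∑ x ∈ s, q.coeff x * (αt x) ^ j = 0 := by
      have := congrArg (fun z => z * (j.factorial : ℂ)) h2
      simpa [Finset.sum_mul, div_mul_cancel₀, Nat.cast_ne_zero,
        (Nat.factorial_ne_zero j)] using this
    calc ∑ i, c i * β i ^ j = ∑ x : ↥s, q.coeff ↑x * (αt ↑x) ^ j :=
      e.sum_comp (fun x : ↥s => q.coeff ↑x * (αt ↑x) ^ j)
    _ = ∑ x ∈ s, q.coeff x * (αt x) ^ j := Finset.sum_coe_sort s (fun x => q.coeff x * (αt x) ^ j)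
    _ = 0 := h3
  have hdet : (Matrix.vandermonde β).det ≠ 0 := Matrix.det_vandermonde_ne_zero_iff.mpr hβinj
  have hvm : Matrix.vecMul c (Matrix.vandermonde β) = 0 := by
    ext j
    simpa [Matrix.vecMul, Matrix.vandermonde, dotProduct] using key (j : ℕ)
  have hc0 : c = 0 := by
    have hU : IsUnit (Matrix.vandermonde β).det := isUnit_iff_ne_zero.mpr hdet
    have := congrArg (fun v => Matrix.vecMul v (Matrix.vandermonde β)⁻¹) hvm
    simpa [Matrix.vecMul_vecMul, Matrix.mul_nonsing_inv _ hU] using this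
  obtain ⟨x, hx⟩ := hsne
  have : q.coeff x = 0 := by
    have := congrFun hc0 (e.symm ⟨x, hx⟩)
    simpa [hc] using this
  exact (Finsupp.mem_support_iff.mp hx) this

instance {m : ℕ} : IsDomain (AddMonoidAlgebra ℂ (Fin m → ℤ)) :=
  NoZeroDivisors.to_isDomain _

lemma eps_single {m : ℕ} (αt : (Fin m → ℤ) →+ ℂ) (x : Fin m → ℤ) :
    eps αt (AddMonoidAlgebra.single x (1 : ℂ)) = expPS (αt x) := by
  rw [eps, AddMonoidAlgebra.lift_single]
  simp [expMonoidHom]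

/-- let `G` be a group, `φ : G → ℤⁿ` surjective, `ρ : G → GL(l, ℂ)` a
representation, `α : ℤⁿ → ℂ` factored as `α = α̃ ∘ p` with `p : ℤⁿ → ℤᵐ` surjective and
`α̃ : ℤᵐ → ℂ` injective.  Let `γ̂ : G → GL(l, ℂ[[t]])` be the formal exponential
deformation, `γ̂(g) = exp(t·α(φ(g)))·ρ(g)`, and let `ρ_p : G → GL(l, ℂ[ℤᵐ])` be given by
`ρ_p(g) = p(φ(g))·ρ(g)`.  Then for every bounded complex `C_*` of f.g. free right
`ℤ[G]`-modules and every `k`, the dimension over `ℂ((t)) = Frac(ℂ[[t]])` of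
`H_k(C_* ⊗_{γ̂} ℂ((t))^l)` equals `b_k(C_*, ρ; p)`, the dimension over `Frac(ℂ[ℤᵐ])` of
`H_k(C_* ⊗_{ρ_p} {ℂ[ℤᵐ]}^l)`. -/
theorem betti_formal_exponential_deformation
    {G : Type} [Group G] {n m l : ℕ}
    (φ : G →* Multiplicative (Fin n → ℤ)) (hφ : Function.Surjective φ)
    (ρ : G →* GL (Fin l) ℂ)
    (α : (Fin n → ℤ) →+ ℂ)
    (p : (Fin n → ℤ) →+ (Fin m → ℤ)) (hp : Function.Surjective p)
    (αt : (Fin m → ℤ) →+ ℂ) (hαt : Function.Injective αt)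
    (hfact : α = αt.comp p)
    (γ : G →* GL (Fin l) (PowerSeries ℂ))
    (hγ : ∀ g : G, (γ g : Matrix (Fin l) (Fin l) (PowerSeries ℂ)) =
      expPS (α (Multiplicative.toAdd (φ g))) •
        ((ρ g : Matrix (Fin l) (Fin l) ℂ).map ⇑(PowerSeries.C (R := ℂ))))
    (ρp : G →* GL (Fin l) (AddMonoidAlgebra ℂ (Fin m → ℤ)))
    (hρp : ∀ g : G, (ρp g : Matrix (Fin l) (Fin l) (AddMonoidAlgebra ℂ (Fin m → ℤ))) =
      AddMonoidAlgebra.single (p (Multiplicative.toAdd (φ g))) (1 : ℂ) •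
        ((ρ g : Matrix (Fin l) (Fin l) ℂ).map
          ⇑(algebraMap ℂ (AddMonoidAlgebra ℂ (Fin m → ℤ)))))
    (C : FinFreeChainComplex (MonoidAlgebra ℤ G)) (k : ℕ) :
    reprBetti C γ k = reprBetti C ρp k := by
  classical
  set A := AddMonoidAlgebra ℂ (Fin m → ℤ) with hA
  set P := PowerSeries ℂ with hP
  set E : A →+* P := (eps αt).toRingHom with hE
  have hEinj : Function.Injective E := eps_injective αt hαt
  set g' : A →+* FractionRing P := (algebraMap P (FractionRing P)).comp E with hg'
  have hg'inj : Function.Injective g' :=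
    (IsFractionRing.injective P (FractionRing P)).comp hEinj
  set F : FractionRing A →+* FractionRing P := IsFractionRing.lift hg'inj with hF
  have hFalg : ∀ x : A, F (algebraMap A (FractionRing A) x) =
      algebraMap P (FractionRing P) (E x) := fun x => IsFractionRing.lift_algebraMap hg'inj x
  -- the induced homs on matrix algebras agree
  have Hhom : E.mapMatrix.comp (reprMatRingHom ρp) = reprMatRingHom γ := by
    apply MonoidAlgebra.ringHom_ext
    · intro b
      have hb : (MonoidAlgebra.single (1 : G) b) = b • (1 : MonoidAlgebra ℤ G) := by
        rw [MonoidAlgebra.one_def, MonoidAlgebra.smul_single]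
        norm_num
      rw [hb, map_zsmul, map_zsmul, _root_.map_one, _root_.map_one]
    · intro g
      have h1 : reprMatRingHom ρp (MonoidAlgebra.single g 1) =
          (ρp g : Matrix (Fin l) (Fin l) A) := by
        simp [reprMatRingHom, MonoidAlgebra.lift_single]
      have h2 : reprMatRingHom γ (MonoidAlgebra.single g 1) =
          (γ g : Matrix (Fin l) (Fin l) P) := by
        simp [reprMatRingHom, MonoidAlgebra.lift_single]
      rw [RingHom.comp_apply, h1, h2, RingHom.mapMatrix_apply, hρp g, hγ g]
      refine Matrix.ext fun i j => ?_
      simp only [Matrix.map_apply, Matrix.smul_apply, smul_eq_mul, _root_.map_mul]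
      have hsingle : E (AddMonoidAlgebra.single (p (Multiplicative.toAdd (φ g))) (1 : ℂ)) =
          expPS (αt (p (Multiplicative.toAdd (φ g)))) := eps_single αt _
      have halg : E (algebraMap ℂ A ((ρ g : Matrix (Fin l) (Fin l) ℂ) i j)) =
          PowerSeries.C ((ρ g : Matrix (Fin l) (Fin l) ℂ) i j) := by
        have := (eps αt).commutes ((ρ g : Matrix (Fin l) (Fin l) ℂ) i j)
        rw [show (E (algebraMap ℂ A ((ρ g : Matrix (Fin l) (Fin l) ℂ) i j))) =
          (eps αt) (algebraMap ℂ A ((ρ g : Matrix (Fin l) (Fin l) ℂ) i j)) from rfl, this,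
          PowerSeries.algebraMap_apply]
        simp
      rw [hsingle, halg, hfact]
      rfl
  -- boundary ranks agree
  have hrank : ∀ k' : ℕ, reprBdryRank C γ k' = reprBdryRank C ρp k' := by
    intro k'
    have hmap : (C.d k').map ⇑(reprMatRingHom γ) =
        ((C.d k').map ⇑(reprMatRingHom ρp)).map ⇑E.mapMatrix := by
      rw [Matrix.map_map, ← Hhom]
      rfl
    have hflat : blockFlatten ((C.d k').map ⇑(reprMatRingHom γ)) =
        (blockFlatten ((C.d k').map ⇑(reprMatRingHom ρp))).map ⇑E := by
      rw [hmap]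
      rfl
    rw [reprBdryRank, reprBdryRank, hflat, Matrix.map_map]
    have hcomp : (⇑(algebraMap P (FractionRing P)) ∘ ⇑E) =
        ⇑F ∘ ⇑(algebraMap A (FractionRing A)) := by
      funext x
      exact (hFalg x).symm
    rw [hcomp, ← Matrix.map_map]
    exact rank_map_field F _
  have hrankAt : ∀ k' : ℕ, reprBdryRankAt C γ k' = reprBdryRankAt C ρp k' := by
    intro k'
    cases k' with
    | zero => rfl
    | succ k'' => exact hrank k''
  rw [reprBetti, reprBetti, hrank, hrankAt]
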